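/- Let Cl be the ring presented by generators t_i for i ∈ ℤ and relations t_i² = 0, t_i t_j + t_j t_i = 0 for |i−j| > 1, and t_i t_{i+1} + t_{i+1} t_i = 1. The ring homomorphism Cl → End_ℤ(V_F) sending each generator t_i to the operator t_i on V_F is injective; that is, the Fock representation of the Clifford algebra Cl on V_F is faithful. -/

import Mathlib

/-- The defining property of the set `𝓘𝓜`: strictly increasing sequences of even
integers which eventually satisfy `x_i = 2i + 2k` for some charge `k ∈ ℤ`. -/
def IMprop (x : ℕ → ℤ) : Prop :=
  StrictMono x ∧ (∀ i, Even (x i)) ∧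
    ∃ k : ℤ, ∃ N : ℕ, ∀ i : ℕ, N ≤ i → x i = 2 * ((i : ℤ) + 1) + 2 * k

/-- The set `𝓘𝓜` of basis sequences (`0`-based indexing: entry `i` is `x_{i+1}`). -/
def IM : Type := {x : ℕ → ℤ // IMprop x}

/-- The fermionic Fock space `V_F`, the free abelian group on the basis `𝓘𝓜`. -/
abbrev VF : Type := IM →₀ ℤ

lemma IM.exists_ge (x : IM) (m : ℤ) : ∃ N : ℕ, m ≤ x.1 N := by
  obtain ⟨-, -, k, N, hN⟩ := x.2
  refine ⟨N + (m - x.1 N).toNat, ?_⟩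
  have h1 := hN N le_rfl
  have h2 := hN (N + (m - x.1 N).toNat) (Nat.le_add_right _ _)
  have h3 : (m - x.1 N) ≤ ((m - x.1 N).toNat : ℤ) := Int.self_le_toNat _
  have h4 : (0 : ℤ) ≤ ((m - x.1 N).toNat : ℤ) := Int.natCast_nonneg _
  push_cast at h2
  omega

/-- The position where `2j` is to be inserted into (or found in) `x`: the least
index `N` with `2j ≤ x N`, i.e. the number of entries of `x` smaller than `2j`. -/
def posIdx (j : ℤ) (x : IM) : ℕ := Nat.find (IM.exists_ge x (2 * j))

lemma posIdx_le (j : ℤ) (x : IM) : 2 * j ≤ x.1 (posIdx j x) :=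
  Nat.find_spec (IM.exists_ge x (2 * j))

lemma posIdx_lt (j : ℤ) (x : IM) : ∀ i, i < posIdx j x → x.1 i < 2 * j := by
  intro i hi
  have := Nat.find_min (IM.exists_ge x (2 * j)) hi
  omega

/-- Insertion of a value `a` into a sequence at position `p`. -/
def insSeq (x : ℕ → ℤ) (p : ℕ) (a : ℤ) : ℕ → ℤ :=
  fun i => if i < p then x i else if i = p then a else x (i - 1)

/-- Deletion of the entry at position `p` of a sequence. -/
def delSeq (x : ℕ → ℤ) (p : ℕ) : ℕ → ℤ :=
  fun i => if i < p then x i else x (i + 1)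

lemma insSeq_mem (x : ℕ → ℤ) (hx : IMprop x) (p : ℕ) (a : ℤ) (ha : Even a)
    (hlow : ∀ i, i < p → x i < a) (hhigh : a < x p) :
    IMprop (insSeq x p a) := by
  obtain ⟨hm, he, k, N, hN⟩ := hx
  refine ⟨strictMono_nat_of_lt_succ ?_, ?_, k - 1, max N p + 1, ?_⟩
  · intro i
    by_cases h1 : i + 1 < p
    · have hi : i < p := by omega
      simp only [insSeq, if_pos hi, if_pos h1]
      exact hm (Nat.lt_succ_self i)
    · by_cases h2 : i + 1 = p
      · have hi : i < p := by omega
        simp only [insSeq, if_pos hi, if_neg h1, if_pos h2]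
        exact hlow i hi
      · by_cases h3 : i = p
        · have hnl : ¬ i < p := by omega
          simp only [insSeq, if_neg hnl, if_pos h3, if_neg h1, if_neg h2]
          have e1 : i + 1 - 1 = i := by omega
          rw [e1, h3]
          exact hhigh
        · have hnl : ¬ i < p := by omega
          simp only [insSeq, if_neg hnl, if_neg h3, if_neg h1, if_neg h2]
          have e1 : i + 1 - 1 = i := by omega
          rw [e1]
          exact hm (by omega : i - 1 < i)
  · intro i
    by_cases h1 : i < p
    · simpa [insSeq, if_pos h1] using he i
    · by_cases h2 : i = p
      · simpa [insSeq, h1, h2] using ha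
      · simpa [insSeq, h1, h2] using he (i - 1)
  · intro i hi
    have h1 : ¬ i < p := by omega
    have h2 : ¬ i = p := by omega
    simp only [insSeq, if_neg h1, if_neg h2]
    rw [hN (i - 1) (by omega)]
    rw [Nat.cast_sub (by omega : 1 ≤ i)]
    push_cast
    ring

lemma delSeq_mem (x : ℕ → ℤ) (hx : IMprop x) (p : ℕ) : IMprop (delSeq x p) := by
  obtain ⟨hm, he, k, N, hN⟩ := hx
  refine ⟨strictMono_nat_of_lt_succ ?_, ?_, k + 1, max N p, ?_⟩
  · intro i
    by_cases h1 : i + 1 < p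
    · simp only [delSeq, if_pos (by omega : i < p), if_pos h1]
      exact hm (Nat.lt_succ_self i)
    · by_cases h2 : i < p
      · simp only [delSeq, if_pos h2, if_neg h1]
        exact hm (by omega : i < i + 1 + 1)
      · simp only [delSeq, if_neg h2, if_neg h1]
        exact hm (by omega : i + 1 < i + 1 + 1)
  · intro i
    by_cases h1 : i < p
    · simpa [delSeq, h1] using he i
    · simpa [delSeq, h1] using he (i + 1)
  · intro i hi
    simp only [delSeq, if_neg (by omega : ¬ i < p)]
    rw [hN (i + 1) (by omega)]
    push_cast
    ring

/-- The creating operator `ψ_j` on a basis element: zero if `2j` occurs in `x`,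
and otherwise `(−1)^n` times the basis element obtained by inserting `2j`,
where `n` is the number of entries of `x` smaller than `2j`. -/
noncomputable def psiB (j : ℤ) (x : IM) : VF :=
  if h : x.1 (posIdx j x) = 2 * j then 0
  else ((-1 : ℤ) ^ (posIdx j x)) •
    Finsupp.single (⟨insSeq x.1 (posIdx j x) (2 * j),
      insSeq_mem x.1 x.2 (posIdx j x) (2 * j) (even_two_mul j) (posIdx_lt j x)
        (lt_of_le_of_ne (posIdx_le j x) (fun hh => h hh.symm))⟩ : IM) 1

/-- The annihilating operator `ψ_j^*` on a basis element: zero if `2j` does not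
occur in `x`, and otherwise `(−1)^{n−1}` times the basis element obtained by
deleting the entry `x_n = 2j`. -/
noncomputable def psiStarB (j : ℤ) (x : IM) : VF :=
  if _ : x.1 (posIdx j x) = 2 * j then
    ((-1 : ℤ) ^ (posIdx j x)) •
      Finsupp.single (⟨delSeq x.1 (posIdx j x), delSeq_mem x.1 x.2 (posIdx j x)⟩ : IM) 1
  else 0

/-- The creating operator `ψ_j : V_F → V_F`. -/
noncomputable def psiOp (j : ℤ) : VF →ₗ[ℤ] VF := Finsupp.lift VF ℤ IM (psiB j)

/-- The annihilating operator `ψ_j^* : V_F → V_F`. -/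
noncomputable def psiStarOp (j : ℤ) : VF →ₗ[ℤ] VF := Finsupp.lift VF ℤ IM (psiStarB j)

/-- The Clifford operators: `t_{2j} = ψ_j` and `t_{2j−1} = ψ_j^* + ψ_{j−1}^*`. -/
noncomputable def tOp (m : ℤ) : VF →ₗ[ℤ] VF :=
  if m % 2 = 0 then psiOp (m / 2)
  else psiStarOp ((m + 1) / 2) + psiStarOp ((m + 1) / 2 - 1)

/-- The relations of the Clifford algebra `Cl`, imposed on the free ring on
generators `t_i`, `i ∈ ℤ`. -/
inductive ClRel : FreeAlgebra ℤ ℤ → FreeAlgebra ℤ ℤ → Prop where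
  | sq (i : ℤ) : ClRel (FreeAlgebra.ι ℤ i * FreeAlgebra.ι ℤ i) 0
  | far_anticomm (i j : ℤ) (h : 1 < |i - j|) :
      ClRel (FreeAlgebra.ι ℤ i * FreeAlgebra.ι ℤ j + FreeAlgebra.ι ℤ j * FreeAlgebra.ι ℤ i) 0
  | adjacent (i : ℤ) :
      ClRel (FreeAlgebra.ι ℤ i * FreeAlgebra.ι ℤ (i + 1) +
        FreeAlgebra.ι ℤ (i + 1) * FreeAlgebra.ι ℤ i) 1

/-- The Clifford algebra `Cl`, presented by generators `t_i` for `i ∈ ℤ` and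
the relations `t_i² = 0`, `t_i t_j + t_j t_i = 0` for `|i−j| > 1`, and
`t_i t_{i+1} + t_{i+1} t_i = 1`. -/
abbrev Cl : Type := RingQuot ClRel

/-- The generator `t_i` of `Cl`. -/
def clT (i : ℤ) : Cl := RingQuot.mkRingHom ClRel (FreeAlgebra.ι ℤ i)
/-! ### Part 1: basic sequence and position lemmas -/

lemma posIdx_eq_of (j : ℤ) (x : IM) (p : ℕ) (h1 : ∀ i < p, x.1 i < 2 * j)
    (h2 : 2 * j ≤ x.1 p) : posIdx j x = p := by
  rw [posIdx, Nat.find_eq_iff]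
  exact ⟨h2, fun n hn hn2 => absurd hn2 (by have := h1 n hn; omega)⟩

lemma posIdx_eq_of_val {j : ℤ} {x : IM} {n : ℕ} (h : x.1 n = 2 * j) : posIdx j x = n := by
  refine posIdx_eq_of j x n (fun i hi => ?_) (le_of_eq h.symm)
  have := x.2.1 hi
  omega

/-- `2 j` does not occur in `x` iff the dite condition in `psiB` is false. -/
lemma not_mem_iff (j : ℤ) (x : IM) : (∀ n, x.1 n ≠ 2 * j) ↔ x.1 (posIdx j x) ≠ 2 * j := by
  constructor
  · exact fun h => h _
  · intro h n hn
    exact h (by rw [posIdx_eq_of_val hn]; exact hn)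

lemma posIdx_mono {i j : ℤ} (h : i ≤ j) (x : IM) : posIdx i x ≤ posIdx j x :=
  Nat.find_min' _ (by have := posIdx_le j x; omega)

lemma lt_posIdx_of_val {j : ℤ} {x : IM} {n : ℕ} (h : x.1 n < 2 * j) : n < posIdx j x := by
  by_contra hc
  have h2 := posIdx_le j x
  have := x.2.1.le_iff_le.mpr (not_lt.mp hc)
  omega

/-! Sequence surgery identities -/

lemma ins_ins {x : ℕ → ℤ} {p q : ℕ} (a b : ℤ) (hpq : p ≤ q) :
    insSeq (insSeq x p a) (q + 1) b = insSeq (insSeq x q b) p a := by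
  funext i
  simp only [insSeq]
  split_ifs <;> first | rfl | omega | (congr 1; omega)

lemma del_ins {x : ℕ → ℤ} {p : ℕ} (a : ℤ) : delSeq (insSeq x p a) p = x := by
  funext i
  simp only [delSeq, insSeq]
  split_ifs <;> first | rfl | omega | (congr 1; omega)

lemma ins_del {x : ℕ → ℤ} {p : ℕ} : insSeq (delSeq x p) p (x p) = x := by
  funext i
  simp only [delSeq, insSeq]
  split_ifs <;> first | rfl | omega | (congr 1; omega)

lemma del_del {x : ℕ → ℤ} {p q : ℕ} (hpq : p ≤ q) :
    delSeq (delSeq x (q + 1)) p = delSeq (delSeq x p) q := by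
  funext i
  simp only [delSeq]
  split_ifs <;> first | rfl | omega | (congr 1; omega)

lemma del_ins_comm {x : ℕ → ℤ} {p q : ℕ} (a : ℤ) (hpq : p ≤ q) :
    delSeq (insSeq x p a) (q + 1) = insSeq (delSeq x q) p a := by
  funext i
  simp only [delSeq, insSeq]
  split_ifs <;> first | rfl | omega | (congr 1; omega)

lemma del_ins_comm' {x : ℕ → ℤ} {p q : ℕ} (a : ℤ) (hqp : q < p) :
    delSeq (insSeq x p a) q = insSeq (delSeq x q) (p - 1) a := by
  funext i
  simp only [delSeq, insSeq]
  split_ifs <;> first | rfl | omega | (congr 1; omega)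
/-! ### Part 2: computing `psiB`/`psiStarB` -/

lemma psiOp_single (j : ℤ) (x : IM) (b : ℤ) :
    psiOp j (Finsupp.single x b) = b • psiB j x := by
  simp [psiOp, Finsupp.lift_apply, Finsupp.sum_single_index]

lemma psiStarOp_single (j : ℤ) (x : IM) (b : ℤ) :
    psiStarOp j (Finsupp.single x b) = b • psiStarB j x := by
  simp [psiStarOp, Finsupp.lift_apply, Finsupp.sum_single_index]

lemma psiB_eq_zero {i : ℤ} {x : IM} {n : ℕ} (h : x.1 n = 2 * i) : psiB i x = 0 := by
  rw [psiB, dif_pos (by rw [posIdx_eq_of_val h]; exact h)]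

lemma psiStarB_eq_zero {i : ℤ} {x : IM} (h : ∀ n, x.1 n ≠ 2 * i) : psiStarB i x = 0 := by
  rw [psiStarB, dif_neg (h _)]

private lemma smul_single_congr {y z : IM} (hy : y = z) {n m : ℕ} (h : n = m) :
    ((-1 : ℤ) ^ n) • Finsupp.single y (1 : ℤ) = ((-1 : ℤ) ^ m) • Finsupp.single z 1 := by
  subst hy; subst h; rfl

lemma psiB_eq {i : ℤ} {x : IM} {p : ℕ} (h1 : ∀ n < p, x.1 n < 2 * i) (h2 : 2 * i < x.1 p) :
    psiB i x = ((-1 : ℤ) ^ p) • Finsupp.single (α := IM)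
      (⟨insSeq x.1 p (2 * i),
        insSeq_mem x.1 x.2 p (2 * i) (even_two_mul i) h1 h2⟩ : IM) 1 := by
  have hp : posIdx i x = p := posIdx_eq_of i x p h1 (le_of_lt h2)
  have hne : x.1 (posIdx i x) ≠ 2 * i := by rw [hp]; omega
  rw [psiB, dif_neg hne]
  exact smul_single_congr (Subtype.ext (show insSeq x.1 (posIdx i x) (2*i) = _ by rw [hp])) hp

lemma psiStarB_eq {i : ℤ} {x : IM} {p : ℕ} (h : x.1 p = 2 * i) :
    psiStarB i x = ((-1 : ℤ) ^ p) • Finsupp.single (α := IM)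
      (⟨delSeq x.1 p, delSeq_mem x.1 x.2 p⟩ : IM) 1 := by
  have hp : posIdx i x = p := posIdx_eq_of_val h
  rw [psiStarB, dif_pos (by rw [hp]; exact h)]
  exact smul_single_congr (Subtype.ext (show delSeq x.1 (posIdx i x) = _ by rw [hp])) hp

/-- If `2 i` is absent, `psiB` in terms of the data from the dite. -/
lemma psiB_not_mem {i : ℤ} {x : IM} (hne : x.1 (posIdx i x) ≠ 2 * i) :
    ∀ n < posIdx i x, x.1 n < 2 * i :=
  fun n hn => posIdx_lt i x n hn

lemma psiB_not_mem' {i : ℤ} {x : IM} (hne : x.1 (posIdx i x) ≠ 2 * i) :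
    2 * i < x.1 (posIdx i x) :=
  lt_of_le_of_ne (posIdx_le i x) (Ne.symm hne)
/-! ### Part 3: CAR relations on basis vectors -/

lemma psiB_eq_zero' {i : ℤ} {x : IM} (h : ∃ n, x.1 n = 2 * i) : psiB i x = 0 :=
  psiB_eq_zero h.choose_spec

lemma mem_ins {x : ℕ → ℤ} {n : ℕ} {c : ℤ} (p : ℕ) (a : ℤ) (h : x n = c) :
    ∃ m, insSeq x p a m = c := by
  by_cases hn : n < p
  · exact ⟨n, by simpa [insSeq, hn] using h⟩
  · refine ⟨n + 1, ?_⟩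
    simp only [insSeq, if_neg (by omega : ¬ n + 1 < p), if_neg (by omega : ¬ n + 1 = p)]
    simpa using h

lemma not_mem_ins {x : ℕ → ℤ} {c : ℤ} {p : ℕ} {a : ℤ} (h : ∀ n, x n ≠ c) (ha : a ≠ c) :
    ∀ m, insSeq x p a m ≠ c := by
  intro m
  simp only [insSeq]
  split_ifs <;> first | exact h _ | exact ha

lemma mem_del {x : ℕ → ℤ} {n p : ℕ} {c : ℤ} (h : x n = c) (hn : n ≠ p) :
    ∃ m, delSeq x p m = c := by
  by_cases h1 : n < p
  · exact ⟨n, by simpa [delSeq, h1] using h⟩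
  · refine ⟨n - 1, ?_⟩
    simp only [delSeq, if_neg (by omega : ¬ n - 1 < p)]
    rw [(by omega : n - 1 + 1 = n)]
    exact h

lemma not_mem_del {x : ℕ → ℤ} {c : ℤ} {p : ℕ} (h : ∀ n, x n ≠ c) :
    ∀ m, delSeq x p m ≠ c := by
  intro m
  simp only [delSeq]
  split_ifs <;> exact h _

private lemma neg_one_pow_self_mul (p : ℕ) : ((-1 : ℤ) ^ p) * ((-1) ^ p) = 1 := by
  rw [← pow_add, ← two_mul, pow_mul]
  norm_num

/-- `ψ_i ψ_i = 0` on a basis vector. -/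
lemma car_pp_self (i : ℤ) (x : IM) : psiOp i (psiB i x) = 0 := by
  by_cases hi : x.1 (posIdx i x) = 2 * i
  · erw [psiB_eq_zero hi, map_zero]
  · erw [psiB_eq (psiB_not_mem hi) (psiB_not_mem' hi), map_smul, psiOp_single, one_smul]
    erw [psiB_eq_zero (show insSeq x.1 (posIdx i x) (2 * i) (posIdx i x) = 2 * i by
      simp [insSeq]), smul_zero]

/-- `ψ*_i ψ*_i = 0` on a basis vector. -/
lemma car_ss_self (i : ℤ) (x : IM) : psiStarOp i (psiStarB i x) = 0 := by
  by_cases hi : x.1 (posIdx i x) = 2 * i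
  · erw [psiStarB_eq hi, map_smul, psiStarOp_single, one_smul]
    erw [psiStarB_eq_zero, smul_zero]
    intro m
    show delSeq x.1 (posIdx i x) m ≠ 2 * i
    simp only [delSeq]
    split_ifs with h
    · have := x.2.1 h
      omega
    · have := x.2.1 (show posIdx i x < m + 1 by omega)
      omega
  · erw [psiStarB_eq_zero ((not_mem_iff i x).mpr hi), map_zero]
private lemma single_pair_cancel {y z : IM} (h : y.1 = z.1) {c d : ℤ} (hcd : c + d = 0) :
    c • Finsupp.single y (1:ℤ) + d • Finsupp.single z 1 = 0 := by
  have hyz : y = z := Subtype.ext h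
  subst hyz
  rw [← add_smul, hcd, zero_smul]

private lemma single_eq_of {y z : IM} (h : y.1 = z.1) {c : ℤ} (hc : c = 1) :
    c • Finsupp.single y (1:ℤ) = Finsupp.single z 1 := by
  have hyz : y = z := Subtype.ext h
  subst hyz
  rw [hc, one_smul]

/-- `ψ_i ψ_j + ψ_j ψ_i = 0` on a basis vector, for `i < j`. -/
lemma car_pp {i j : ℤ} (hij : i < j) (x : IM) :
    psiOp i (psiB j x) + psiOp j (psiB i x) = 0 := by
  by_cases hi : x.1 (posIdx i x) = 2 * i
  · erw [psiB_eq_zero hi, map_zero, add_zero]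
    by_cases hj : x.1 (posIdx j x) = 2 * j
    · erw [psiB_eq_zero hj, map_zero]
    · erw [psiB_eq (psiB_not_mem hj) (psiB_not_mem' hj), map_smul, psiOp_single, one_smul,
        psiB_eq_zero' (mem_ins _ _ hi), smul_zero]
  · by_cases hj : x.1 (posIdx j x) = 2 * j
    · erw [psiB_eq_zero hj, map_zero, zero_add,
        psiB_eq (psiB_not_mem hi) (psiB_not_mem' hi), map_smul, psiOp_single, one_smul,
        psiB_eq_zero' (mem_ins _ _ hj), smul_zero]
    · -- both absent
      have h1i := psiB_not_mem hi
      have h2i := psiB_not_mem' hi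
      have h1j := psiB_not_mem hj
      have h2j := psiB_not_mem' hj
      set p := posIdx i x with hp
      set q := posIdx j x with hq
      have hpq : p ≤ q := posIdx_mono (le_of_lt hij) x
      erw [psiB_eq h1j h2j, psiB_eq h1i h2i, map_smul, map_smul, psiOp_single, psiOp_single,
        one_smul, one_smul]
      -- first composite: insert 2 i at p into (insert 2 j at q)
      have hA : ∀ n < p, insSeq x.1 q (2 * j) n < 2 * i := by
        intro n hn
        simp only [insSeq, if_pos (show n < q by omega)]
        exact h1i n hn
      have hB : 2 * i < insSeq x.1 q (2 * j) p := by
        by_cases h : p < q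
        · rw [show insSeq x.1 q (2*j) p = x.1 p from by simp [insSeq, h]]
          exact h2i
        · have hpq2 : p = q := by omega
          rw [show insSeq x.1 q (2*j) p = 2*j from by simp [insSeq, hpq2]]
          omega
      -- second composite: insert 2 j at q+1 into (insert 2 i at p)
      have hC : ∀ n < q + 1, insSeq x.1 p (2 * i) n < 2 * j := by
        intro n hn
        by_cases e1 : n < p
        · simp only [insSeq, if_pos e1]; have := h1i n e1; omega
        · by_cases e2 : n = p
          · simp only [insSeq, if_neg e1, if_pos e2]; omega
          · simp only [insSeq, if_neg e1, if_neg e2]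
            have := h1j (n - 1) (by omega); omega
      have hD : 2 * j < insSeq x.1 p (2 * i) (q + 1) := by
        simp only [insSeq, if_neg (show ¬ q + 1 < p by omega),
          if_neg (show ¬ q + 1 = p by omega)]
        simpa using h2j
      erw [psiB_eq hA hB, psiB_eq hC hD, smul_smul, smul_smul]
      exact single_pair_cancel ((ins_ins (2*i) (2*j) hpq).symm) (by rw [pow_succ]; ring)
private lemma neg_one_pow_pred {p : ℕ} (hp : 0 < p) : ((-1:ℤ))^p = -((-1:ℤ))^(p-1) := by
  conv_lhs => rw [show p = p - 1 + 1 by omega]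
  rw [pow_succ]; ring

/-- `ψ*_i ψ*_j + ψ*_j ψ*_i = 0` on a basis vector, for `i < j`. -/
lemma car_ss {i j : ℤ} (hij : i < j) (x : IM) :
    psiStarOp i (psiStarB j x) + psiStarOp j (psiStarB i x) = 0 := by
  by_cases hi : x.1 (posIdx i x) = 2 * i
  · by_cases hj : x.1 (posIdx j x) = 2 * j
    · set p := posIdx i x with hpdef
      set q := posIdx j x with hqdef
      have hpq : p < q := lt_posIdx_of_val (show x.1 p < 2*j by rw [hi]; omega)
      erw [psiStarB_eq hj, psiStarB_eq hi, map_smul, map_smul, psiStarOp_single,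
        psiStarOp_single, one_smul, one_smul]
      have e1 : delSeq x.1 q p = 2 * i := by
        simp only [delSeq, if_pos hpq]; exact hi
      have e2 : delSeq x.1 p (q-1) = 2 * j := by
        simp only [delSeq, if_neg (show ¬ q-1 < p by omega)]
        rw [show q - 1 + 1 = q by omega]; exact hj
      erw [psiStarB_eq e1, psiStarB_eq e2, smul_smul, smul_smul]
      refine single_pair_cancel ?_ ?_
      · show delSeq (delSeq x.1 q) p = delSeq (delSeq x.1 p) (q-1)
        have h := del_del (x := x.1) (p := p) (q := q-1) (by omega)
        rwa [show q - 1 + 1 = q by omega] at h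
      · rw [neg_one_pow_pred (show 0 < q by omega)]; ring
    · erw [psiStarB_eq_zero ((not_mem_iff j x).mpr hj), map_zero, zero_add,
        psiStarB_eq hi, map_smul, psiStarOp_single, one_smul,
        psiStarB_eq_zero (not_mem_del ((not_mem_iff j x).mpr hj)), smul_zero]
  · erw [psiStarB_eq_zero ((not_mem_iff i x).mpr hi), map_zero, add_zero]
    by_cases hj : x.1 (posIdx j x) = 2 * j
    · erw [psiStarB_eq hj, map_smul, psiStarOp_single, one_smul,
        psiStarB_eq_zero (not_mem_del ((not_mem_iff i x).mpr hi)), smul_zero]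
    · erw [psiStarB_eq_zero ((not_mem_iff j x).mpr hj), map_zero]

/-- `ψ_i ψ*_i + ψ*_i ψ_i = 1` on a basis vector. -/
lemma car_ps_self (i : ℤ) (x : IM) :
    psiOp i (psiStarB i x) + psiStarOp i (psiB i x) = Finsupp.single x 1 := by
  by_cases hi : x.1 (posIdx i x) = 2 * i
  · set p := posIdx i x with hpdef
    erw [psiB_eq_zero hi, map_zero, add_zero, psiStarB_eq hi, map_smul, psiOp_single, one_smul]
    have hA : ∀ n < p, delSeq x.1 p n < 2*i := by
      intro n hn
      simp only [delSeq, if_pos hn]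
      have := x.2.1 hn
      omega
    have hB : 2*i < delSeq x.1 p p := by
      simp only [delSeq, if_neg (lt_irrefl p)]
      have := x.2.1 (show p < p + 1 by omega)
      omega
    erw [psiB_eq hA hB, smul_smul]
    refine single_eq_of ?_ (neg_one_pow_self_mul p)
    show insSeq (delSeq x.1 p) p (2*i) = x.1
    rw [← hi]
    exact ins_del
  · set p := posIdx i x with hpdef
    erw [psiStarB_eq_zero ((not_mem_iff i x).mpr hi), map_zero, zero_add,
      psiB_eq (psiB_not_mem hi) (psiB_not_mem' hi), map_smul, psiStarOp_single, one_smul]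
    have e1 : insSeq x.1 p (2*i) p = 2*i := by simp [insSeq]
    erw [psiStarB_eq e1, smul_smul]
    exact single_eq_of (del_ins (2*i)) (neg_one_pow_self_mul p)

/-- `ψ_i ψ*_j + ψ*_j ψ_i = 0` on a basis vector, for `i ≠ j`. -/
lemma car_ps {i j : ℤ} (hij : i ≠ j) (x : IM) :
    psiOp i (psiStarB j x) + psiStarOp j (psiB i x) = 0 := by
  by_cases hj : x.1 (posIdx j x) = 2 * j
  · by_cases hi : x.1 (posIdx i x) = 2 * i
    · have hne : posIdx i x ≠ posIdx j x := fun he => by rw [he, hj] at hi; omega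
      erw [psiB_eq_zero hi, map_zero, add_zero, psiStarB_eq hj, map_smul, psiOp_single,
        one_smul, psiB_eq_zero' (mem_del hi hne), smul_zero]
    · set p := posIdx i x with hpdef
      set q := posIdx j x with hqdef
      have h1i := psiB_not_mem hi
      have h2i := psiB_not_mem' hi
      rcases lt_or_gt_of_ne hij with hlt | hgt
      · have hpq : p ≤ q := posIdx_mono (le_of_lt hlt) x
        erw [psiStarB_eq hj, psiB_eq h1i h2i, map_smul, map_smul, psiOp_single,
          psiStarOp_single, one_smul, one_smul]
        have hA : ∀ n < p, delSeq x.1 q n < 2*i := by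
          intro n hn
          simp only [delSeq, if_pos (show n < q by omega)]
          exact h1i n hn
        have hB : 2*i < delSeq x.1 q p := by
          by_cases h : p < q
          · simp only [delSeq, if_pos h]; exact h2i
          · simp only [delSeq, if_neg (show ¬ p < q by omega)]
            have h3 := x.2.1 (show q < p + 1 by omega)
            omega
        have e2 : insSeq x.1 p (2*i) (q+1) = 2*j := by
          simp only [insSeq, if_neg (show ¬ q+1 < p by omega),
            if_neg (show ¬ q+1 = p by omega)]
          simpa using hj
        erw [psiB_eq hA hB, psiStarB_eq e2, smul_smul, smul_smul]
        refine single_pair_cancel ?_ (by rw [pow_succ]; ring)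
        show insSeq (delSeq x.1 q) p (2*i) = delSeq (insSeq x.1 p (2*i)) (q+1)
        exact (del_ins_comm (2*i) hpq).symm
      · have hqp : q < p := lt_posIdx_of_val (show x.1 q < 2*i by rw [hj]; omega)
        erw [psiStarB_eq hj, psiB_eq h1i h2i, map_smul, map_smul, psiOp_single,
          psiStarOp_single, one_smul, one_smul]
        have hA : ∀ n < p - 1, delSeq x.1 q n < 2*i := by
          intro n hn
          simp only [delSeq]
          split_ifs with h
          · exact h1i n (by omega)
          · exact h1i (n+1) (by omega)
        have hB : 2*i < delSeq x.1 q (p-1) := by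
          simp only [delSeq, if_neg (show ¬ p-1 < q by omega)]
          rw [show p - 1 + 1 = p by omega]
          exact h2i
        have e2 : insSeq x.1 p (2*i) q = 2*j := by
          simp only [insSeq, if_pos hqp]; exact hj
        erw [psiB_eq hA hB, psiStarB_eq e2, smul_smul, smul_smul]
        refine single_pair_cancel ?_ ?_
        · show insSeq (delSeq x.1 q) (p-1) (2*i) = delSeq (insSeq x.1 p (2*i)) q
          exact (del_ins_comm' (2*i) hqp).symm
        · rw [neg_one_pow_pred (show 0 < p by omega)]; ring
  · erw [psiStarB_eq_zero ((not_mem_iff j x).mpr hj), map_zero, zero_add]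
    by_cases hi : x.1 (posIdx i x) = 2 * i
    · erw [psiB_eq_zero hi, map_zero]
    · erw [psiB_eq (psiB_not_mem hi) (psiB_not_mem' hi), map_smul, psiStarOp_single, one_smul,
        psiStarB_eq_zero (not_mem_ins ((not_mem_iff j x).mpr hj) (by omega)), smul_zero]
/-! ### Part 4: operator-level CAR relations -/

lemma psi_sq (j : ℤ) : (psiOp j * psiOp j : Module.End ℤ VF) = 0 := by
  refine Finsupp.lhom_ext fun x b => ?_
  show psiOp j (psiOp j (Finsupp.single x b)) = 0
  rw [psiOp_single, map_smul, car_pp_self, smul_zero]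

lemma psiS_sq (j : ℤ) : (psiStarOp j * psiStarOp j : Module.End ℤ VF) = 0 := by
  refine Finsupp.lhom_ext fun x b => ?_
  show psiStarOp j (psiStarOp j (Finsupp.single x b)) = 0
  rw [psiStarOp_single, map_smul, car_ss_self, smul_zero]

lemma psi_acomm (i j : ℤ) :
    (psiOp i * psiOp j + psiOp j * psiOp i : Module.End ℤ VF) = 0 := by
  rcases lt_trichotomy i j with h | h | h
  · refine Finsupp.lhom_ext fun x b => ?_
    show psiOp i (psiOp j (Finsupp.single x b)) + psiOp j (psiOp i (Finsupp.single x b)) = 0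
    rw [psiOp_single, psiOp_single, map_smul, map_smul, ← smul_add, car_pp h, smul_zero]
  · subst h
    rw [psi_sq, add_zero]
  · refine Finsupp.lhom_ext fun x b => ?_
    show psiOp i (psiOp j (Finsupp.single x b)) + psiOp j (psiOp i (Finsupp.single x b)) = 0
    rw [psiOp_single, psiOp_single, map_smul, map_smul, ← smul_add, add_comm, car_pp h,
      smul_zero]

lemma psiS_acomm (i j : ℤ) :
    (psiStarOp i * psiStarOp j + psiStarOp j * psiStarOp i : Module.End ℤ VF) = 0 := by
  rcases lt_trichotomy i j with h | h | h
  · refine Finsupp.lhom_ext fun x b => ?_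
    show psiStarOp i (psiStarOp j (Finsupp.single x b)) +
      psiStarOp j (psiStarOp i (Finsupp.single x b)) = 0
    rw [psiStarOp_single, psiStarOp_single, map_smul, map_smul, ← smul_add, car_ss h,
      smul_zero]
  · subst h
    rw [psiS_sq, add_zero]
  · refine Finsupp.lhom_ext fun x b => ?_
    show psiStarOp i (psiStarOp j (Finsupp.single x b)) +
      psiStarOp j (psiStarOp i (Finsupp.single x b)) = 0
    rw [psiStarOp_single, psiStarOp_single, map_smul, map_smul, ← smul_add, add_comm,
      car_ss h, smul_zero]

lemma psi_psiS (i j : ℤ) :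
    (psiOp i * psiStarOp j + psiStarOp j * psiOp i : Module.End ℤ VF) =
      if i = j then 1 else 0 := by
  split_ifs with h
  · subst h
    refine Finsupp.lhom_ext fun x b => ?_
    show psiOp i (psiStarOp i (Finsupp.single x b)) +
      psiStarOp i (psiOp i (Finsupp.single x b)) = Finsupp.single x b
    rw [psiStarOp_single, psiOp_single, map_smul, map_smul, ← smul_add, car_ps_self]
    simp
  · refine Finsupp.lhom_ext fun x b => ?_
    show psiOp i (psiStarOp j (Finsupp.single x b)) +
      psiStarOp j (psiOp i (Finsupp.single x b)) = 0
    rw [psiStarOp_single, psiOp_single, map_smul, map_smul, ← smul_add, car_ps h, smul_zero]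

lemma psi_swap (i j : ℤ) :
    (psiOp i * psiOp j : Module.End ℤ VF) = -(psiOp j * psiOp i) :=
  eq_neg_of_add_eq_zero_left (psi_acomm i j)

lemma psiS_swap (i j : ℤ) :
    (psiStarOp i * psiStarOp j : Module.End ℤ VF) = -(psiStarOp j * psiStarOp i) :=
  eq_neg_of_add_eq_zero_left (psiS_acomm i j)

/-! ### Part 5: expressing `tOp` by parity, and the Clifford relations -/

lemma tOp_even (j : ℤ) : tOp (2*j) = psiOp j := by
  rw [tOp, if_pos (by omega : (2*j) % 2 = 0), (by omega : (2*j)/2 = j)]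

lemma tOp_odd (j : ℤ) : tOp (2*j-1) = psiStarOp j + psiStarOp (j-1) := by
  rw [tOp, if_neg (by omega : ¬ (2*j-1) % 2 = 0), (by omega : (2*j-1+1)/2 = j)]

lemma master_ee (a b : ℤ) :
    (tOp (2*a) * tOp (2*b) + tOp (2*b) * tOp (2*a) : Module.End ℤ VF) = 0 := by
  rw [tOp_even, tOp_even]; exact psi_acomm a b

lemma master_eo (a u : ℤ) :
    (tOp (2*a) * tOp (2*u-1) + tOp (2*u-1) * tOp (2*a) : Module.End ℤ VF) =
      (if a = u then 1 else 0) + (if a = u - 1 then 1 else 0) := by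
  rw [tOp_even, tOp_odd, mul_add, add_mul]
  have hr : psiOp a * psiStarOp u + psiOp a * psiStarOp (u-1) +
      (psiStarOp u * psiOp a + psiStarOp (u-1) * psiOp a) =
      (psiOp a * psiStarOp u + psiStarOp u * psiOp a) +
      (psiOp a * psiStarOp (u-1) + psiStarOp (u-1) * psiOp a) := by abel
  rw [hr, psi_psiS a u, psi_psiS a (u-1)]

lemma master_oo (u v : ℤ) :
    (tOp (2*u-1) * tOp (2*v-1) + tOp (2*v-1) * tOp (2*u-1) : Module.End ℤ VF) = 0 := by
  rw [tOp_odd, tOp_odd, add_mul, add_mul, mul_add, mul_add, mul_add, mul_add,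
    psiS_swap v u, psiS_swap v (u-1), psiS_swap (v-1) u, psiS_swap (v-1) (u-1)]
  abel

lemma tOp_sq (m : ℤ) : (tOp m * tOp m : Module.End ℤ VF) = 0 := by
  rcases Int.even_or_odd m with ⟨a, ha⟩ | ⟨a, ha⟩
  · rw [show m = 2*a by omega, tOp_even]; exact psi_sq a
  · rw [show m = 2*(a+1)-1 by omega]
    have h := master_oo (a+1) (a+1)
    -- 2 X = 0 in a torsion-free module of endomorphisms
    have h2 : (2 : ℤ) • (tOp (2*(a+1)-1) * tOp (2*(a+1)-1) : Module.End ℤ VF) = 0 := by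
      rw [two_smul]; exact h
    refine Finsupp.lhom_ext fun x b => ?_
    have h3 := LinearMap.congr_fun h2 (Finsupp.single x b)
    simp only [LinearMap.smul_apply, LinearMap.zero_apply, smul_eq_zero] at h3
    rcases h3 with h3 | h3
    · omega
    · simpa using h3
/-! ### Part 6: the charge grading operator `Γ` -/

noncomputable def charge (x : IM) : ℤ := (x.2.2.2).choose

lemma charge_spec (x : IM) : ∃ N : ℕ, ∀ i : ℕ, N ≤ i → x.1 i = 2*((i:ℤ)+1) + 2*charge x :=
  (x.2.2.2).choose_spec

lemma charge_eq {x : IM} {k : ℤ}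
    (h : ∃ N : ℕ, ∀ i : ℕ, N ≤ i → x.1 i = 2*((i:ℤ)+1) + 2*k) : charge x = k := by
  obtain ⟨N1, h1⟩ := charge_spec x
  obtain ⟨N2, h2⟩ := h
  have e1 := h1 (max N1 N2) (le_max_left _ _)
  have e2 := h2 (max N1 N2) (le_max_right _ _)
  omega

def sgn (k : ℤ) : ℤ := if Even k then 1 else -1

lemma sgn_mul_self (k : ℤ) : sgn k * sgn k = 1 := by
  unfold sgn; split_ifs <;> norm_num

lemma sgn_sub_one (k : ℤ) : sgn (k-1) = - sgn k := by
  by_cases h : Even k <;> simp [sgn, Int.even_sub_one, h]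

lemma sgn_add_one (k : ℤ) : sgn (k+1) = - sgn k := by
  by_cases h : Even k <;> simp [sgn, Int.even_add_one, h]

lemma charge_ins {x : IM} {p : ℕ} {a : ℤ} (y : IM) (hy : y.1 = insSeq x.1 p a) :
    charge y = charge x - 1 := by
  obtain ⟨N, hN⟩ := charge_spec x
  refine charge_eq ⟨max N p + 1, fun i hi => ?_⟩
  rw [hy]
  simp only [insSeq, if_neg (show ¬ i < p by omega), if_neg (show ¬ i = p by omega)]
  rw [hN (i-1) (by omega), Nat.cast_sub (by omega : 1 ≤ i)]
  push_cast
  ring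

lemma charge_del {x : IM} {p : ℕ} (y : IM) (hy : y.1 = delSeq x.1 p) :
    charge y = charge x + 1 := by
  obtain ⟨N, hN⟩ := charge_spec x
  refine charge_eq ⟨max N p, fun i hi => ?_⟩
  rw [hy]
  simp only [delSeq, if_neg (show ¬ i < p by omega)]
  rw [hN (i+1) (by omega)]
  push_cast
  ring

noncomputable def gammaOp : Module.End ℤ VF :=
  Finsupp.lift VF ℤ IM (fun x => sgn (charge x) • Finsupp.single x 1)

lemma gammaOp_single (x : IM) (b : ℤ) :
    gammaOp (Finsupp.single x b) = (b * sgn (charge x)) • Finsupp.single x 1 := by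
  simp [gammaOp, Finsupp.lift_apply, Finsupp.sum_single_index, smul_smul]

lemma gamma_sq : (gammaOp * gammaOp : Module.End ℤ VF) = 1 := by
  refine Finsupp.lhom_ext fun x b => ?_
  show gammaOp (gammaOp (Finsupp.single x b)) = Finsupp.single x b
  rw [gammaOp_single, map_smul, gammaOp_single, smul_smul, one_mul, mul_assoc,
    sgn_mul_self, mul_one]
  simp

lemma gamma_psiB (j : ℤ) (x : IM) :
    gammaOp (psiB j x) = (- sgn (charge x)) • psiB j x := by
  rw [psiB]
  split_ifs with h
  · simp
  · erw [map_smul, gammaOp_single, one_mul,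
      charge_ins (x := x) _ rfl, sgn_sub_one, smul_smul, smul_smul, mul_comm]
    rfl

lemma gamma_psiStarB (j : ℤ) (x : IM) :
    gammaOp (psiStarB j x) = (- sgn (charge x)) • psiStarB j x := by
  rw [psiStarB]
  split_ifs with h
  · erw [map_smul, gammaOp_single, one_mul,
      charge_del (x := x) _ rfl, sgn_add_one, smul_smul, smul_smul, mul_comm]
    rfl
  · simp

lemma gamma_psi (j : ℤ) : (gammaOp * psiOp j : Module.End ℤ VF) = -(psiOp j * gammaOp) := by
  refine Finsupp.lhom_ext fun x b => ?_
  show gammaOp (psiOp j (Finsupp.single x b)) = -(psiOp j (gammaOp (Finsupp.single x b)))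
  rw [psiOp_single, map_smul, gamma_psiB, gammaOp_single, map_smul, psiOp_single]
  rw [smul_smul, smul_smul, ← neg_smul]
  congr 1
  ring

lemma gamma_psiS (j : ℤ) :
    (gammaOp * psiStarOp j : Module.End ℤ VF) = -(psiStarOp j * gammaOp) := by
  refine Finsupp.lhom_ext fun x b => ?_
  show gammaOp (psiStarOp j (Finsupp.single x b)) = -(psiStarOp j (gammaOp (Finsupp.single x b)))
  rw [psiStarOp_single, map_smul, gamma_psiStarB, gammaOp_single, map_smul, psiStarOp_single]
  rw [smul_smul, smul_smul, ← neg_smul]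
  congr 1
  ring

lemma gamma_tOp (m : ℤ) : (gammaOp * tOp m : Module.End ℤ VF) = -(tOp m * gammaOp) := by
  rcases Int.even_or_odd m with ⟨a, ha⟩ | ⟨a, ha⟩
  · rw [show m = 2*a by omega, tOp_even]; exact gamma_psi a
  · rw [show m = 2*(a+1)-1 by omega, tOp_odd, mul_add, add_mul, gamma_psiS, gamma_psiS]
    abel
/-! ### Part 7: the remaining Clifford relations for `tOp` -/

lemma tOp_far (i j : ℤ) (h : 1 < |i - j|) :
    (tOp i * tOp j + tOp j * tOp i : Module.End ℤ VF) = 0 := by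
  have h' : 1 < i - j ∨ 1 < -(i - j) := lt_abs.mp h
  rcases Int.even_or_odd i with ⟨a, ha⟩ | ⟨a, ha⟩ <;>
    rcases Int.even_or_odd j with ⟨b, hb⟩ | ⟨b, hb⟩
  · rw [show i = 2*a by omega, show j = 2*b by omega]
    exact master_ee a b
  · rw [show i = 2*a by omega, show j = 2*(b+1)-1 by omega, master_eo a (b+1),
      if_neg (by omega), if_neg (by omega), add_zero]
  · rw [show i = 2*(a+1)-1 by omega, show j = 2*b by omega, add_comm, master_eo b (a+1),
      if_neg (by omega), if_neg (by omega), add_zero]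
  · rw [show i = 2*(a+1)-1 by omega, show j = 2*(b+1)-1 by omega]
    exact master_oo (a+1) (b+1)

lemma tOp_adj (i : ℤ) :
    (tOp i * tOp (i+1) + tOp (i+1) * tOp i : Module.End ℤ VF) = 1 := by
  rcases Int.even_or_odd i with ⟨a, ha⟩ | ⟨a, ha⟩
  · rw [show i = 2*a by omega, show (2*a+1 : ℤ) = 2*(a+1)-1 by ring, master_eo a (a+1),
      if_neg (by omega), if_pos (by omega), zero_add]
  · rw [show i = 2*(a+1)-1 by omega, show (2*(a+1)-1+1 : ℤ) = 2*(a+1) by ring, add_comm,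
      master_eo (a+1) (a+1), if_pos rfl, if_neg (by omega), add_zero]

/-! ### Part 8: the representation `φ : Cl →+* End(V_F)` -/

noncomputable def fockRep : Cl →+* Module.End ℤ VF :=
  RingQuot.lift ⟨(FreeAlgebra.lift ℤ (fun i => tOp i)).toRingHom, by
    intro x y h
    cases h with
    | sq i =>
      simp only [map_mul, map_zero, AlgHom.toRingHom_eq_coe, RingHom.coe_coe,
        FreeAlgebra.lift_ι_apply]
      exact tOp_sq i
    | far_anticomm i j hij =>
      simp only [map_add, map_mul, map_zero, AlgHom.toRingHom_eq_coe, RingHom.coe_coe,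
        FreeAlgebra.lift_ι_apply]
      exact tOp_far i j hij
    | adjacent i =>
      simp only [map_add, map_mul, map_one, AlgHom.toRingHom_eq_coe, RingHom.coe_coe,
        FreeAlgebra.lift_ι_apply]
      exact tOp_adj i⟩

lemma fockRep_clT (i : ℤ) : fockRep (clT i) = tOp i := by
  rw [clT, fockRep, RingQuot.lift_mkRingHom_apply]
  simp [FreeAlgebra.lift_ι_apply]

/-! ### Part 9: monomials and spanning -/

noncomputable def TT (l : List ℤ) : Module.End ℤ VF := (l.map tOp).prod

def monoCl (l : List ℤ) : Cl := (l.map clT).prod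

lemma monoCl_nil : monoCl [] = 1 := rfl

lemma monoCl_cons (a : ℤ) (l : List ℤ) : monoCl (a :: l) = clT a * monoCl l := by
  simp [monoCl]

lemma TT_nil : TT [] = 1 := rfl

lemma TT_cons (a : ℤ) (l : List ℤ) : TT (a :: l) = tOp a * TT l := by
  simp [TT]

lemma fockRep_mono (l : List ℤ) : fockRep (monoCl l) = TT l := by
  rw [monoCl, map_list_prod, List.map_map, TT]
  congr 1
  exact List.map_congr_left fun i _ => fockRep_clT i

lemma clT_sq (i : ℤ) : clT i * clT i = 0 := by
  have h := RingQuot.mkRingHom_rel (ClRel.sq i)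
  simpa only [clT, map_mul, map_zero] using h

lemma clT_far (i j : ℤ) (h : 1 < |i - j|) : clT i * clT j + clT j * clT i = 0 := by
  have h2 := RingQuot.mkRingHom_rel (ClRel.far_anticomm i j h)
  simpa only [clT, map_add, map_mul, map_zero] using h2

lemma clT_adj (i : ℤ) : clT i * clT (i+1) + clT (i+1) * clT i = 1 := by
  have h2 := RingQuot.mkRingHom_rel (ClRel.adjacent i)
  simpa only [clT, map_add, map_mul, map_one] using h2

open Classical in
noncomputable def gMono (l : List ℤ) : Cl :=
  if l.Chain' (·<·) then monoCl l else 0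

lemma gMono_of_chain {l : List ℤ} (h : l.Chain' (·<·)) : gMono l = monoCl l := by
  rw [gMono, if_pos h]
lemma foldr_min_le (i : ℤ) (m : List ℤ) : m.foldr min i ≤ i ∧ ∀ y ∈ m, m.foldr min i ≤ y := by
  induction m with
  | nil => exact ⟨le_rfl, by simp⟩
  | cons c m ih =>
    refine ⟨le_trans (min_le_right _ _) ih.1, fun y hy => ?_⟩
    rcases List.mem_cons.mp hy with rfl | hy2
    · exact min_le_left _ _
    · exact le_trans (min_le_right _ _) (ih.2 y hy2)

/-- Sorting key lemma: multiplying a sorted monomial with entries `≥ b` on the left by a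
generator `clT i` with `b ≤ i` stays in the span of sorted monomials with entries `≥ b`. -/
lemma key_sort : ∀ (n : ℕ) (l : List ℤ), l.length ≤ n → ∀ (b i : ℤ), l.Chain' (·<·) →
    (∀ y ∈ l, b ≤ y) → b ≤ i →
    clT i * monoCl l ∈ Submodule.span ℤ (gMono '' {m | ∀ y ∈ m, b ≤ y}) := by
  intro n
  induction n with
  | zero =>
    intro l hlen b i _ _ hbi
    have hnil : l = [] := by
      cases l with
      | nil => rfl
      | cons a l' => simp at hlen
    subst hnil
    rw [monoCl_nil, mul_one]
    refine Submodule.subset_span ⟨[i], fun y hy => ?_, ?_⟩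
    · simp at hy; omega
    · rw [gMono_of_chain (List.isChain_singleton _), monoCl_cons, monoCl_nil, mul_one]
  | succ n ih =>
    intro l hlen b i hchain hlb hbi
    cases l with
    | nil =>
      rw [monoCl_nil, mul_one]
      refine Submodule.subset_span ⟨[i], fun y hy => ?_, ?_⟩
      · simp at hy; omega
      · rw [gMono_of_chain (List.isChain_singleton _), monoCl_cons, monoCl_nil, mul_one]
    | cons a l' =>
      have hchain' : l'.Chain' (·<·) := hchain.tail
      have ha_lt : ∀ y ∈ l', a < y := by
        have hp := List.isChain_iff_pairwise.mp hchain
        exact (List.pairwise_cons.mp hp).1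
      rcases lt_trichotomy i a with h | h | h
      · rw [← monoCl_cons]
        refine Submodule.subset_span ⟨i :: a :: l', fun y hy => ?_, ?_⟩
        · rcases List.mem_cons.mp hy with rfl | hy2
          · exact hbi
          · exact hlb y hy2
        · rw [gMono_of_chain (List.isChain_cons_cons.mpr ⟨h, hchain⟩)]
      · subst h
        rw [monoCl_cons, ← mul_assoc, clT_sq, zero_mul]
        exact Submodule.zero_mem _
      · rw [monoCl_cons, ← mul_assoc]
        have hswap : clT i * clT a = (if i = a + 1 then 1 else 0) - clT a * clT i := by
          split_ifs with he
          · rw [he]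
            exact eq_sub_of_add_eq' (clT_adj a)
          · rw [zero_sub]
            exact eq_neg_of_add_eq_zero_left
              (clT_far i a (by rw [abs_of_pos (by omega)]; omega))
        rw [hswap, sub_mul, mul_assoc]
        refine Submodule.sub_mem _ ?_ ?_
        · split_ifs with he
          · rw [one_mul]
            exact Submodule.subset_span ⟨l', fun y hy => hlb y (List.mem_cons_of_mem _ hy),
              gMono_of_chain hchain'⟩
          · rw [zero_mul]
            exact Submodule.zero_mem _
        · have hin : clT i * monoCl l' ∈
              Submodule.span ℤ (gMono '' {m | ∀ y ∈ m, a + 1 ≤ y}) :=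
            ih l' (by simpa using hlen) (a+1) i hchain'
              (fun y hy => by have := ha_lt y hy; omega) (by omega)
          have hstep : ∀ (z : Cl), z ∈ Submodule.span ℤ (gMono '' {m | ∀ y ∈ m, a + 1 ≤ y}) →
              clT a * z ∈ Submodule.span ℤ (gMono '' {m | ∀ y ∈ m, b ≤ y}) := by
            intro z hz
            induction hz using Submodule.span_induction with
            | mem w hw =>
              obtain ⟨m, hm, rfl⟩ := hw
              by_cases hcm : m.Chain' (·<·)
              · rw [gMono_of_chain hcm, ← monoCl_cons]
                refine Submodule.subset_span ⟨a :: m, fun y hy => ?_, ?_⟩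
                · have hba : b ≤ a := hlb a (List.mem_cons_self)
                  rcases List.mem_cons.mp hy with rfl | hy2
                  · exact hba
                  · have := hm y hy2; omega
                · rw [gMono_of_chain (List.isChain_cons.mpr
                    ⟨fun y hy => by have := hm y (List.mem_of_mem_head? hy); omega, hcm⟩)]
              · rw [gMono, if_neg hcm, mul_zero]
                exact Submodule.zero_mem _
            | zero => rw [mul_zero]; exact Submodule.zero_mem _
            | add u v hu hv hpu hpv => rw [mul_add]; exact Submodule.add_mem _ hpu hpv
            | smul c u hu hpu => rw [mul_smul_comm]; exact Submodule.smul_mem _ _ hpu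
          exact hstep _ hin

lemma clT_mul_mem {z : Cl} (i : ℤ)
    (hz : z ∈ Submodule.span ℤ (Set.range gMono)) :
    clT i * z ∈ Submodule.span ℤ (Set.range gMono) := by
  induction hz using Submodule.span_induction with
  | mem w hw =>
    obtain ⟨m, rfl⟩ := hw
    by_cases hcm : m.Chain' (·<·)
    · rw [gMono_of_chain hcm]
      have hb := foldr_min_le i m
      exact Submodule.span_mono (Set.image_subset_range _ _)
        (key_sort m.length m le_rfl (m.foldr min i) i hcm hb.2 hb.1)
    · rw [gMono, if_neg hcm, mul_zero]; exact Submodule.zero_mem _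
  | zero => rw [mul_zero]; exact Submodule.zero_mem _
  | add u v hu hv hpu hpv => rw [mul_add]; exact Submodule.add_mem _ hpu hpv
  | smul c u hu hpu => rw [mul_smul_comm]; exact Submodule.smul_mem _ _ hpu
lemma monoCl_mul_mem (l : List ℤ) {v : Cl} (hv : v ∈ Submodule.span ℤ (Set.range gMono)) :
    monoCl l * v ∈ Submodule.span ℤ (Set.range gMono) := by
  induction l with
  | nil => rwa [monoCl_nil, one_mul]
  | cons a l ih => rw [monoCl_cons, mul_assoc]; exact clT_mul_mem a ih

lemma mono_span (z : Cl) : z ∈ Submodule.span ℤ (Set.range gMono) := by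
  have hone : (1 : Cl) ∈ Submodule.span ℤ (Set.range gMono) :=
    Submodule.subset_span ⟨[], by rw [gMono_of_chain List.isChain_nil, monoCl_nil]⟩
  have hmul : ∀ u ∈ Submodule.span ℤ (Set.range gMono),
      ∀ v ∈ Submodule.span ℤ (Set.range gMono),
      u * v ∈ Submodule.span ℤ (Set.range gMono) := by
    intro u hu v hv
    induction hu using Submodule.span_induction with
    | mem w hw =>
      obtain ⟨m, rfl⟩ := hw
      by_cases hcm : m.Chain' (·<·)
      · rw [gMono_of_chain hcm]; exact monoCl_mul_mem m hv
      · rw [gMono, if_neg hcm, zero_mul]; exact Submodule.zero_mem _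
    | zero => rw [zero_mul]; exact Submodule.zero_mem _
    | add u1 u2 h1 h2 hp1 hp2 => rw [add_mul]; exact Submodule.add_mem _ hp1 hp2
    | smul c u1 h1 hp1 => rw [smul_mul_assoc]; exact Submodule.smul_mem _ _ hp1
  obtain ⟨w, rfl⟩ := RingQuot.mkRingHom_surjective ClRel z
  refine FreeAlgebra.induction ℤ ℤ
    (motive := fun w => RingQuot.mkRingHom ClRel w ∈ Submodule.span ℤ (Set.range gMono))
    ?_ ?_ ?_ ?_ w
  · intro r
    have h1 : (algebraMap ℤ (FreeAlgebra ℤ ℤ)) r = ((r : ℤ) : FreeAlgebra ℤ ℤ) := by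
      exact eq_intCast _ r
    rw [h1, map_intCast]
    have h2 : ((r : ℤ) : Cl) = r • (1 : Cl) := by simp [zsmul_eq_mul]
    rw [h2]
    exact Submodule.smul_mem _ _ hone
  · intro i
    exact Submodule.subset_span ⟨[i], by
      rw [gMono_of_chain (List.isChain_singleton _), monoCl_cons, monoCl_nil, mul_one]; rfl⟩
  · intro a b ha hb
    rw [map_mul]
    exact hmul _ ha _ hb
  · intro a b ha hb
    rw [map_add]
    exact Submodule.add_mem _ ha hb
/-! ### Part 10: stripping the top generator -/

lemma gamma_conj (l : List ℤ) :
    (gammaOp * TT l * gammaOp : Module.End ℤ VF) = ((-1:ℤ)^l.length) • TT l := by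
  induction l with
  | nil => rw [TT_nil, mul_one, gamma_sq]; simp
  | cons a l ih =>
    rw [TT_cons, List.length_cons, pow_succ]
    have h1 : gammaOp * (tOp a * TT l) * gammaOp = (gammaOp * tOp a) * (TT l * gammaOp) := by
      rw [← mul_assoc, mul_assoc]
    rw [h1, gamma_tOp a, neg_mul]
    have h2 : (tOp a * gammaOp) * (TT l * gammaOp) = tOp a * (gammaOp * TT l * gammaOp) := by
      rw [mul_assoc (tOp a), ← mul_assoc gammaOp]
    rw [h2, ih, mul_smul_comm, mul_comm ((-1:ℤ)^l.length) (-1), neg_one_mul, neg_smul]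

lemma concat_getLast {l : List ℤ} {M : ℤ} (h : l.getLast? = some M) :
    l = l.dropLast ++ [M] := by
  have hne : l ≠ [] := by intro he; subst he; simp at h
  rw [List.getLast?_eq_getLast hne] at h
  have h3 : l.getLast hne = M := by injection h
  conv_lhs => rw [← List.dropLast_concat_getLast hne]
  rw [h3]

lemma chain_getLast_eq : ∀ (l : List ℤ) (M : ℤ), l.Chain' (·<·) → M ∈ l →
    (∀ y ∈ l, y ≤ M) → l.getLast? = some M := by
  intro l
  induction l with
  | nil => intro M _ hM _; simp at hM
  | cons a l ih =>
    intro M hc hM hle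
    cases l with
    | nil =>
      simp at hM
      subst hM
      simp
    | cons c l' =>
      rw [List.getLast?_cons_cons]
      refine ih M hc.tail ?_ (fun y hy => hle y (List.mem_cons_of_mem _ hy))
      rcases List.mem_cons.mp hM with rfl | h2
      · exfalso
        have hac : M < c := (List.isChain_cons_cons.mp hc).1
        have := hle c (List.mem_cons_of_mem _ (List.mem_cons_self))
        omega
      · exact h2

lemma strip (M : ℤ) : ∀ (l : List ℤ), l.Chain' (·<·) → (∀ y ∈ l, y ≤ M) →
    tOp (M+1) * TT l - ((-1:ℤ)^l.length) • (TT l * tOp (M+1)) =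
      if l.getLast? = some M then ((-1:ℤ)^(l.length - 1)) • TT l.dropLast else 0 := by
  intro l
  induction l with
  | nil =>
    intro _ _
    rw [if_neg (by simp), TT_nil, mul_one, one_mul]
    simp
  | cons a l ih =>
    intro hc hle
    have haM : a ≤ M := hle a (List.mem_cons_self)
    have hswap : tOp (M+1) * tOp a = (if a = M then 1 else 0) - tOp a * tOp (M+1) := by
      split_ifs with h
      · rw [h]
        exact eq_sub_of_add_eq' (tOp_adj M)
      · rw [zero_sub]
        exact eq_neg_of_add_eq_zero_left
          (tOp_far (M+1) a (by rw [abs_of_pos (by omega)]; omega))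
    have hkey : tOp (M+1) * TT (a::l) - ((-1:ℤ)^((a::l).length)) • (TT (a::l) * tOp (M+1))
        = (if a = M then 1 else 0) * TT l
          - tOp a * (tOp (M+1) * TT l - ((-1:ℤ)^l.length) • (TT l * tOp (M+1))) := by
      rw [TT_cons, List.length_cons, pow_succ, mul_neg_one, neg_smul, sub_neg_eq_add,
        mul_assoc (tOp a) (TT l) (tOp (M+1)), ← mul_smul_comm, ← mul_assoc, hswap, sub_mul,
        mul_assoc (tOp a) (tOp (M+1)) (TT l), mul_sub]
      abel
    rw [hkey, ih hc.tail (fun y hy => hle y (List.mem_cons_of_mem _ hy))]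
    by_cases haM2 : a = M
    · subst haM2
      have hlnil : l = [] := by
        cases l with
        | nil => rfl
        | cons c l' =>
          exfalso
          have h1 : a < c := (List.isChain_cons_cons.mp hc).1
          have h2 := hle c (List.mem_cons_of_mem _ (List.mem_cons_self))
          omega
      subst hlnil
      simp [TT_nil]
    · rw [if_neg haM2, zero_mul]
      by_cases hlnil : l = []
      · subst hlnil
        simp [haM2]
      · have hgl : (a :: l).getLast? = l.getLast? := by
          cases l with
          | nil => exact absurd rfl hlnil
          | cons c l' => exact List.getLast?_cons_cons
        rw [hgl]
        by_cases hM : l.getLast? = some M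
        · rw [if_pos hM, if_pos hM, zero_sub, mul_smul_comm]
          have hd : (a :: l).dropLast = a :: l.dropLast := by
            cases l with
            | nil => exact absurd rfl hlnil
            | cons c l' => rfl
          have hlen : (a :: l).length - 1 = l.length := by simp
          rw [hd, hlen, TT_cons,
            neg_one_pow_pred (show 0 < l.length from List.length_pos_iff.mpr hlnil),
            neg_smul]
        · rw [if_neg hM, if_neg hM, mul_zero]
          simp
/-! ### Part 11: linear independence of sorted monomial operators -/

def vacIM : IM :=
  ⟨fun i => 2*((i:ℤ)+1), fun a b h => by simp only []; omega,
    fun i => ⟨(i:ℤ)+1, by ring⟩, 0, 0, fun i _ => by ring⟩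

lemma TT_indep : ∀ (n : ℕ) (F : Finset (List ℤ)), (∑ l ∈ F, (l.length + 1)) ≤ n →
    (∀ l ∈ F, l.Chain' (·<·)) → ∀ (a : List ℤ → ℤ),
    (∑ l ∈ F, a l • TT l) = 0 → ∀ l ∈ F, a l = 0 := by
  classical
  intro n
  induction n with
  | zero =>
    intro F hF _ a _ l hl
    have h1 : l.length + 1 ≤ ∑ m ∈ F, (m.length + 1) :=
      Finset.single_le_sum (f := fun m => m.length + 1) (fun i _ => Nat.zero_le _) hl
    omega
  | succ n ih =>
    intro F hFn hFc a hsum l₀ hl₀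
    set s : Finset ℤ := F.biUnion (fun l => l.toFinset) with hs
    by_cases hse : s = ∅
    · have hnil : ∀ l ∈ F, l = [] := by
        intro l hl
        cases hll : l with
        | nil => rfl
        | cons c l' =>
          exfalso
          have : c ∈ s := Finset.mem_biUnion.mpr ⟨l, hl, by rw [hll]; simp⟩
          rw [hse] at this
          simp at this
      have hl₀nil := hnil l₀ hl₀
      subst hl₀nil
      have hFsingle : F = {[]} := by
        apply Finset.eq_singleton_iff_unique_mem.mpr
        exact ⟨hl₀, fun m hm => hnil m hm⟩
      rw [hFsingle, Finset.sum_singleton, TT_nil] at hsum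
      have h2 := LinearMap.congr_fun hsum (Finsupp.single vacIM 1)
      simp only [LinearMap.smul_apply, Module.End.one_apply, LinearMap.zero_apply,
        Finsupp.smul_single, smul_eq_mul, mul_one] at h2
      exact (Finsupp.single_eq_zero).mp h2
    · have hsne : s.Nonempty := Finset.nonempty_iff_ne_empty.mpr hse
      set M := s.max' hsne with hM
      have hle : ∀ l ∈ F, ∀ y ∈ l, y ≤ M := fun l hl y hy =>
        Finset.le_max' _ _ (Finset.mem_biUnion.mpr ⟨l, hl, List.mem_toFinset.mpr hy⟩)
      obtain ⟨lM, hlM, hMin⟩ : ∃ l ∈ F, M ∈ l := by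
        have h1 := s.max'_mem hsne
        rw [← hM] at h1
        obtain ⟨l, hl, h2⟩ := Finset.mem_biUnion.mp h1
        exact ⟨l, hl, List.mem_toFinset.mp h2⟩
      -- apply the stripping operation to the relation
      have hA : ∑ l ∈ F, a l • (tOp (M+1) * TT l) = 0 := by
        calc ∑ l ∈ F, a l • (tOp (M+1) * TT l)
            = ∑ l ∈ F, tOp (M+1) * (a l • TT l) :=
              Finset.sum_congr rfl fun l _ => (mul_smul_comm _ _ _).symm
          _ = tOp (M+1) * ∑ l ∈ F, a l • TT l := by rw [Finset.mul_sum]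
          _ = 0 := by rw [hsum, mul_zero]
      have hB : ∑ l ∈ F, a l • (gammaOp * TT l * gammaOp * tOp (M+1)) = 0 := by
        calc ∑ l ∈ F, a l • (gammaOp * TT l * gammaOp * tOp (M+1))
            = ∑ l ∈ F, gammaOp * (a l • TT l) * gammaOp * tOp (M+1) :=
              Finset.sum_congr rfl fun l _ => by
                rw [mul_smul_comm, smul_mul_assoc, smul_mul_assoc]
          _ = gammaOp * (∑ l ∈ F, a l • TT l) * gammaOp * tOp (M+1) := by
              rw [Finset.mul_sum, ← Finset.sum_mul, ← Finset.sum_mul]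
          _ = 0 := by rw [hsum, mul_zero, zero_mul, zero_mul]
      have hD : ∑ l ∈ F,
          (if l.getLast? = some M then (a l * (-1:ℤ)^(l.length - 1)) • TT l.dropLast else 0)
          = 0 := by
        have hterm : ∀ l ∈ F,
            (if l.getLast? = some M then (a l * (-1:ℤ)^(l.length - 1)) • TT l.dropLast else 0)
            = a l • (tOp (M+1) * TT l) - a l • (gammaOp * TT l * gammaOp * tOp (M+1)) := by
          intro l hl
          have h1 : gammaOp * TT l * gammaOp * tOp (M+1)
              = ((-1:ℤ)^l.length) • (TT l * tOp (M+1)) := by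
            rw [gamma_conj, smul_mul_assoc]
          rw [h1, ← smul_sub, strip M l (hFc l hl) (hle l hl)]
          split_ifs with h
          · rw [smul_smul]
          · rw [smul_zero]
        rw [Finset.sum_congr rfl hterm, Finset.sum_sub_distrib, hA, hB, sub_zero]
      rw [← Finset.sum_filter] at hD
      set F1 := F.filter (fun l => l.getLast? = some M) with hF1
      have hinj : ∀ x ∈ F1, ∀ y ∈ F1, x.dropLast = y.dropLast → x = y := by
        intro u hu v hv he
        have hu2 := (Finset.mem_filter.mp hu).2
        have hv2 := (Finset.mem_filter.mp hv).2
        rw [concat_getLast hu2, concat_getLast hv2, he]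
      set F' := F1.image List.dropLast with hF'
      set a' : List ℤ → ℤ := fun m => a (m ++ [M]) * (-1)^(m.length) with ha'
      have hsum' : ∑ m ∈ F', a' m • TT m = 0 := by
        rw [Finset.sum_image hinj]
        rw [← hD]
        refine Finset.sum_congr rfl fun l hl => ?_
        have hl2 := (Finset.mem_filter.mp hl).2
        have h1 : l.dropLast ++ [M] = l := (concat_getLast hl2).symm
        show (a (l.dropLast ++ [M]) * (-1:ℤ)^(l.dropLast.length)) • TT l.dropLast = _
        rw [List.length_dropLast, h1]
      have hF1ne : lM ∈ F1 := Finset.mem_filter.mpr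
        ⟨hlM, chain_getLast_eq lM M (hFc lM hlM) hMin (hle lM hlM)⟩
      have hmeas : (∑ m ∈ F', (m.length + 1)) ≤ n := by
        have h1 : ∑ m ∈ F', (m.length + 1) = ∑ l ∈ F1, (l.dropLast.length + 1) :=
          Finset.sum_image hinj
        have h2 : ∑ l ∈ F1, (l.dropLast.length + 1) = ∑ l ∈ F1, l.length := by
          refine Finset.sum_congr rfl fun l hl => ?_
          have hl2 := (Finset.mem_filter.mp hl).2
          have hne : l ≠ [] := by intro he; rw [he] at hl2; simp at hl2
          rw [List.length_dropLast]
          have := List.length_pos_iff.mpr hne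
          omega
        have h3 : ∑ l ∈ F1, l.length + 1 ≤ ∑ l ∈ F1, (l.length + 1) := by
          rw [Finset.sum_add_distrib]
          have : 1 ≤ ∑ _l ∈ F1, 1 :=
            Finset.single_le_sum (f := fun _ => 1) (fun i _ => Nat.zero_le _) hF1ne
          omega
        have h4 : ∑ l ∈ F1, (l.length + 1) ≤ ∑ l ∈ F, (l.length + 1) :=
          Finset.sum_le_sum_of_subset (Finset.filter_subset _ _)
        omega
      have hchains' : ∀ m ∈ F', m.Chain' (·<·) := by
        intro m hm
        obtain ⟨l, hl, rfl⟩ := Finset.mem_image.mp hm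
        exact ((hFc l (Finset.mem_filter.mp hl).1).prefix (List.dropLast_prefix l))
      have hres := ih F' hmeas hchains' a' hsum'
      have hF1zero : ∀ l ∈ F1, a l = 0 := by
        intro l hl
        have h1 := hres l.dropLast (Finset.mem_image_of_mem _ hl)
        have hl2 := (Finset.mem_filter.mp hl).2
        have h2 : l.dropLast ++ [M] = l := (concat_getLast hl2).symm
        have h1' : a (l.dropLast ++ [M]) * (-1:ℤ)^(l.dropLast.length) = 0 := h1
        rw [h2] at h1'
        rcases mul_eq_zero.mp h1' with h3 | h3
        · exact h3
        · exact absurd h3 (pow_ne_zero _ (by norm_num))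
      by_cases hl₀1 : l₀ ∈ F1
      · exact hF1zero l₀ hl₀1
      · set F2 := F.filter (fun l => ¬ (l.getLast? = some M)) with hF2
        have hsum2 : ∑ l ∈ F2, a l • TT l = 0 := by
          have hsplit := Finset.sum_filter_add_sum_filter_not F
            (fun l => l.getLast? = some M) (fun l => a l • TT l)
          have hz : ∑ l ∈ F1, a l • TT l = 0 :=
            Finset.sum_eq_zero fun l hl => by rw [hF1zero l hl, zero_smul]
          rw [← hF1, ← hF2] at hsplit
          rw [hz, zero_add] at hsplit
          rw [hsplit, hsum]
        have hmeas2 : (∑ l ∈ F2, (l.length + 1)) ≤ n := by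
          have hsplit := Finset.sum_filter_add_sum_filter_not F
            (fun l => l.getLast? = some M) (fun l => l.length + 1)
          rw [← hF1, ← hF2] at hsplit
          have h5 : 1 ≤ ∑ l ∈ F1, (l.length + 1) :=
            le_trans (by omega) (Finset.single_le_sum (fun i _ => Nat.zero_le _) hF1ne)
          omega
        exact ih F2 hmeas2 (fun l hl => hFc l (Finset.mem_filter.mp hl).1) a hsum2 l₀
          (Finset.mem_filter.mpr ⟨hl₀, fun hc => hl₀1 (Finset.mem_filter.mpr ⟨hl₀, hc⟩)⟩)

/-- The Fock representation of the Clifford algebra `Cl` on `V_F`, sending each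
generator `t_i` to the operator `t_i`, is a well-defined ring homomorphism and
is faithful (injective). -/
theorem clifford_fock_representation_faithful :
    ∃ φ : Cl →+* Module.End ℤ VF,
      (∀ i : ℤ, φ (clT i) = tOp i) ∧ Function.Injective φ := by
  classical
  refine ⟨fockRep, fockRep_clT, ?_⟩
  rw [injective_iff_map_eq_zero]
  intro z hz
  obtain ⟨c, hc⟩ := Finsupp.mem_span_range_iff_exists_finsupp.mp (mono_span z)
  have h2 : ∑ l ∈ c.support.filter (fun l => l.Chain' (·<·)), c l • TT l = 0 := by
    have h3 : fockRep z = 0 := hz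
    rw [← hc, Finsupp.sum, map_sum] at h3
    have h4 : ∀ l ∈ c.support, fockRep (c l • gMono l)
        = (if l.Chain' (·<·) then c l • TT l else 0) := by
      intro l _
      rw [map_zsmul]
      by_cases hch : l.Chain' (·<·)
      · rw [if_pos hch, gMono_of_chain hch, fockRep_mono]
      · rw [if_neg hch, gMono, if_neg hch, map_zero, smul_zero]
    rw [Finset.sum_congr rfl h4, ← Finset.sum_filter] at h3
    exact h3
  have h5 := TT_indep (∑ l ∈ c.support.filter (fun l => l.Chain' (·<·)), (l.length + 1)) _
    le_rfl (fun l hl => (Finset.mem_filter.mp hl).2) c h2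
  rw [← hc, Finsupp.sum]
  refine Finset.sum_eq_zero fun l hl => ?_
  by_cases hch : l.Chain' (·<·)
  · rw [h5 l (Finset.mem_filter.mpr ⟨hl, hch⟩)]; exact zero_smul _ _
  · rw [gMono, if_neg hch]; exact smul_zero _
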